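/- Let G' be a graph and let u, v be already-chosen distinct vertices such that every pair of vertices of G' has at least c common neighbours in G', and let W ⊆ V(G') with |W| < c. Then a path x_1 x_2 ... x_m (m ≥ 2) with prescribed distinct images for x_1's parent-endpoint attachment u and x_m's attachment v can be embedded: formally, there exist distinct vertices w_1, ..., w_m in V(G') \ W with u w_1, w_1 w_2, ..., w_{m-1} w_m, w_m v all edges, provided m + |W| + 2 ≤ c. -/

import Mathlib

lemma stmt_17_aux {V : Type*} [Fintype V] [DecidableEq V] (G' : SimpleGraph V)
    [DecidableRel G'.Adj] (c : ℕ)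
    (hc : ∀ x y : V, x ≠ y → c ≤ (G'.neighborFinset x ∩ G'.neighborFinset y).card)
    (u v : V) (huv : u ≠ v) (W : Finset V) :
    ∀ n : ℕ, 1 ≤ n → n + W.card + 1 ≤ c →
      ∃ w : ℕ → V,
        (∀ i j : ℕ, i < n → j < n → w i = w j → i = j) ∧
        (∀ i : ℕ, i < n → w i ∉ W ∧ w i ≠ u ∧ G'.Adj (w i) v) ∧
        G'.Adj u (w 0) ∧
        (∀ i : ℕ, i + 1 < n → G'.Adj (w i) (w (i + 1))) := by
  have key : ∀ (a b : V), a ≠ b → ∀ F : Finset V, F.card < c →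
      ∃ x, G'.Adj a x ∧ G'.Adj b x ∧ x ∉ F := by
    intro a b hab F hF
    have h1 := hc a b hab
    have h2 := Finset.le_card_sdiff F (G'.neighborFinset a ∩ G'.neighborFinset b)
    have h3 : 0 < ((G'.neighborFinset a ∩ G'.neighborFinset b) \ F).card := by omega
    obtain ⟨x, hx⟩ := Finset.card_pos.mp h3
    simp only [Finset.mem_sdiff, Finset.mem_inter, SimpleGraph.mem_neighborFinset] at hx
    exact ⟨x, hx.1.1, hx.1.2, hx.2⟩
  intro n
  induction n with
  | zero => intro h; omega
  | succ n ih =>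
    intro _ hle
    by_cases hn : n = 0
    · subst hn
      obtain ⟨x, hxu, hxv, hxF⟩ := key u v huv (insert u W) (by
        have := Finset.card_insert_le u W; omega)
      refine ⟨fun _ => x, ?_, ?_, hxu, ?_⟩
      · intro i j hi hj _; omega
      · intro i hi
        simp only [Finset.mem_insert, not_or] at hxF
        exact ⟨hxF.2, hxF.1, hxv.symm⟩
      · intro i hi; omega
    · have hn1 : 1 ≤ n := by omega
      obtain ⟨w, hinj, hprop, h0, hchain⟩ := ih hn1 (by omega)
      have hwv : w (n - 1) ≠ v := fun h => by
        have := (hprop (n - 1) (by omega)).2.2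
        rw [h] at this; exact G'.loopless.irrefl v this
      set F : Finset V := insert u (W ∪ (Finset.range n).image w) with hF
      have hFcard : F.card < c := by
        rw [hF]
        have h4 := Finset.card_insert_le u (W ∪ (Finset.range n).image w)
        have h5 := Finset.card_union_le W ((Finset.range n).image w)
        have h6 := Finset.card_image_le (s := Finset.range n) (f := w)
        rw [Finset.card_range] at h6
        omega
      obtain ⟨x, hxp, hxv, hxF⟩ := key (w (n - 1)) v hwv F hFcard
      simp only [hF, Finset.mem_insert, Finset.mem_union, Finset.mem_image,
        Finset.mem_range, not_or, not_exists, not_and] at hxF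
      obtain ⟨hxu, hxW, hxold⟩ := hxF
      refine ⟨fun i => if i < n then w i else x, ?_, ?_, ?_, ?_⟩
      · intro i j hi hj hij
        by_cases h1 : i < n <;> by_cases h2 : j < n <;>
          simp only [h1, h2, if_pos, if_neg, if_true, if_false] at hij
        · exact hinj i j h1 h2 hij
        · exact absurd hij (hxold i h1)
        · exact absurd hij.symm (hxold j h2)
        · omega
      · intro i hi
        by_cases h1 : i < n
        · simp only [h1, if_true]; exact hprop i h1
        · simp only [h1, if_false]; exact ⟨hxW, hxu, hxv.symm⟩
      · simp only [hn1, if_pos (by omega : (0:ℕ) < n)]; exact h0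
      · intro i hi
        by_cases h1 : i + 1 < n
        · simp only [if_pos h1, if_pos (by omega : i < n)]; exact hchain i h1
        · have hieq : i + 1 = n := by omega
          have hi' : i < n := by omega
          simp only [if_pos hi', if_neg (by omega : ¬ i + 1 < n)]
          have : i = n - 1 := by omega
          rw [this]; exact hxp

/-- In a graph `G'` where every two distinct vertices have at least `c` common
neighbours, given distinct attachment vertices `u ≠ v`, a forbidden set `W` with
`|W| < c`, and `m ≥ 2` with `m + |W| + 2 ≤ c`, there is a path `u w₁ w₂ … w_m v` with
the `wᵢ` distinct and avoiding `W`. -/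
theorem stmt_17 {V : Type*} [Fintype V] [DecidableEq V] (G' : SimpleGraph V)
    [DecidableRel G'.Adj] (c : ℕ)
    (hc : ∀ x y : V, x ≠ y → c ≤ (G'.neighborFinset x ∩ G'.neighborFinset y).card)
    (u v : V) (huv : u ≠ v) (W : Finset V) (hW : W.card < c)
    (m : ℕ) (hm : 2 ≤ m) (hmc : m + W.card + 2 ≤ c) :
    ∃ w : ℕ → V,
      (∀ i j : ℕ, i < m → j < m → w i = w j → i = j) ∧
      (∀ i : ℕ, i < m → w i ∉ W) ∧
      G'.Adj u (w 0) ∧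
      (∀ i : ℕ, i + 1 < m → G'.Adj (w i) (w (i + 1))) ∧
      G'.Adj (w (m - 1)) v := by
  obtain ⟨w, hinj, hprop, h0, hchain⟩ :=
    stmt_17_aux G' c hc u v huv W m (by omega) (by omega)
  exact ⟨w, hinj, fun i hi => (hprop i hi).1, h0, hchain,
    (hprop (m - 1) (by omega)).2.2⟩
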